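/- arXiv:1908.03836 — 2 statements merged into one kernel-verified Lean document; each statement's English description precedes it below -/
import Mathlib

section
/- The function f(s) = (1-s)·exp(s/(1-s)) + s·exp((1-s)/s) defined on (0,1) satisfies: for any 0 < u < 1/2, sup over s ∈ (u, 1-u) of f(s) is at most (1-u)·exp(u/(1-u)) + u·exp((1-u)/u). -/
open Real

noncomputable def Fber (s : ℝ) : ℝ :=
  (1 - s) * Real.exp (s / (1 - s)) + s * Real.exp ((1 - s) / s)

lemma Fber_hasDerivAt {s : ℝ} (h0 : 0 < s) (h1 : s < 1) :
    HasDerivAt Fber (s / (1 - s) * Real.exp (s / (1 - s))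
      - (1 - s) / s * Real.exp ((1 - s) / s)) s := by
  have hs1 : (1 : ℝ) - s ≠ 0 := ne_of_gt (by linarith)
  have hs : s ≠ 0 := ne_of_gt h0
  have ha : HasDerivAt (fun x : ℝ => x / (1 - x)) (1 / (1 - s) ^ 2) s := by
    have h := (hasDerivAt_id s).div ((hasDerivAt_id s).const_sub 1) hs1
    refine h.congr_deriv ?_
    simp only [id_eq]
    field_simp
    ring
  have hb : HasDerivAt (fun x : ℝ => (1 - x) / x) (-(1 / s ^ 2)) s := by
    have h := ((hasDerivAt_id s).const_sub 1).div (hasDerivAt_id s) hs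
    refine h.congr_deriv ?_
    simp only [id_eq]
    field_simp
    ring
  have hA := ((hasDerivAt_id s).const_sub 1).mul ha.exp
  have hB := (hasDerivAt_id s).mul hb.exp
  have h := hA.add hB
  refine h.congr_deriv ?_
  simp only [id_eq]
  field_simp
  ring

lemma Fber_anti {u : ℝ} (hu0 : 0 < u) (hu : u < 1/2) :
    AntitoneOn Fber (Set.Icc u (1/2)) := by
  have hconv : Convex ℝ (Set.Icc u (1/2 : ℝ)) := convex_Icc _ _
  apply antitoneOn_of_deriv_nonpos hconv
  · intro x hx
    have hx0 : 0 < x := lt_of_lt_of_le hu0 hx.1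
    have hx1 : x < 1 := by
      have := hx.2; linarith
    exact (Fber_hasDerivAt hx0 hx1).differentiableAt.continuousAt.continuousWithinAt
  · rw [interior_Icc]
    intro x hx
    have hx0 : 0 < x := lt_trans hu0 hx.1
    have hx1 : x < 1 := by have := hx.2; linarith
    exact (Fber_hasDerivAt hx0 hx1).differentiableAt.differentiableWithinAt
  · rw [interior_Icc]
    intro x hx
    have hx0 : 0 < x := lt_trans hu0 hx.1
    have hx2 : x < 1/2 := hx.2
    have hx1 : x < 1 := by linarith
    have h1x : 0 < 1 - x := by linarith
    rw [(Fber_hasDerivAt hx0 hx1).deriv]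
    have hab : x / (1 - x) ≤ (1 - x) / x := by
      rw [div_le_div_iff₀ h1x hx0]
      nlinarith
    have ha0 : 0 ≤ x / (1 - x) := by positivity
    have hmul : x / (1 - x) * Real.exp (x / (1 - x))
        ≤ (1 - x) / x * Real.exp ((1 - x) / x) :=
      mul_le_mul hab (Real.exp_le_exp.mpr hab) (Real.exp_pos _).le
        (le_trans ha0 hab)
    linarith

theorem bernoulli_moment_function_bounded (u : ℝ) (hu0 : 0 < u) (hu : u < 1/2) :
    ∀ s ∈ Set.Ioo u (1 - u),
      (1 - s) * Real.exp (s / (1 - s)) + s * Real.exp ((1 - s) / s)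
        ≤ (1 - u) * Real.exp (u / (1 - u)) + u * Real.exp ((1 - u) / u) := by
  intro s hs
  obtain ⟨hs1, hs2⟩ := hs
  have hu_mem : u ∈ Set.Icc u (1/2 : ℝ) := Set.left_mem_Icc.mpr (le_of_lt hu)
  have key : ∀ t ∈ Set.Icc u (1/2 : ℝ), Fber t ≤ Fber u := by
    intro t ht
    exact Fber_anti hu0 hu hu_mem ht ht.1
  show Fber s ≤ Fber u
  by_cases h : s ≤ 1/2
  · exact key s ⟨le_of_lt hs1, h⟩
  · push_neg at h
    have hsym : Fber s = Fber (1 - s) := by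
      unfold Fber
      rw [show (1:ℝ) - (1 - s) = s by ring]
      ring
    rw [hsym]
    exact key (1 - s) ⟨by linarith, by linarith⟩
end

section
/- Let S be a random variable whose distribution is a finite mixture of Bernoulli distributions: P(S = 1) = Σ_{h=1}^H φ_h s^{(h)} and P(S = 0) = Σ_{h=1}^H φ_h (1 - s^{(h)}), where φ_h > 0, Σφ_h = 1, and u < s^{(h)} < 1-u for all h, with 0 < u < 1/2. Let μ = E[S]. Then E[exp((S - μ)^2 / Var(S))] ≤ (1-u)·exp(u/(1-u)) + u·exp((1-u)/u). -/
open MeasureTheory Real Finset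

lemma mbsb_g_convex : ConvexOn ℝ (Set.Ioi (0:ℝ)) (fun x => x * Real.exp ((1-x)/x)) := by
  have hint : interior (Set.Ioi (0:ℝ)) = Set.Ioi 0 := interior_Ioi
  have hder1 : ∀ x : ℝ, x ∈ Set.Ioi (0:ℝ) →
      HasDerivAt (fun x => x * Real.exp ((1-x)/x))
        (Real.exp ((1-x)/x) * (1 - 1/x)) x := by
    intro x hx
    have hx0 : x ≠ 0 := ne_of_gt hx
    have h1 : HasDerivAt (fun x : ℝ => (1-x)/x) (-(1/x^2)) x := by
      have := ((hasDerivAt_id x).const_sub 1).div (hasDerivAt_id x) hx0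
      convert this using 1
      rfl
      rfl
      rfl
      simp only [id]
      field_simp
      ring
    have h2 : HasDerivAt (fun x : ℝ => Real.exp ((1-x)/x))
        (Real.exp ((1-x)/x) * (-(1/x^2))) x := h1.exp
    have h3 := (hasDerivAt_id x).mul h2
    convert h3 using 1
    rfl
    rfl
    rfl
    simp only [id]
    field_simp
    ring
  have hder2 : ∀ x : ℝ, x ∈ Set.Ioi (0:ℝ) →
      HasDerivAt (fun x => Real.exp ((1-x)/x) * (1 - 1/x))
        (Real.exp ((1-x)/x) / x^3) x := by
    intro x hx
    have hx0 : x ≠ 0 := ne_of_gt hx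
    have h1 : HasDerivAt (fun x : ℝ => (1-x)/x) (-(1/x^2)) x := by
      have := ((hasDerivAt_id x).const_sub 1).div (hasDerivAt_id x) hx0
      convert this using 1
      rfl
      rfl
      rfl
      simp only [id]
      field_simp
      ring
    have h2 : HasDerivAt (fun x : ℝ => Real.exp ((1-x)/x))
        (Real.exp ((1-x)/x) * (-(1/x^2))) x := h1.exp
    have h4 : HasDerivAt (fun x : ℝ => 1 - 1/x) (1/x^2) x := by
      have h5 : HasDerivAt (fun x : ℝ => x⁻¹) (-(x^2)⁻¹) x := hasDerivAt_inv hx0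
      have h6 := h5.const_sub 1
      have heq : (fun x : ℝ => 1 - x⁻¹) = (fun x : ℝ => 1 - 1/x) := by
        funext y; rw [one_div]
      rw [heq] at h6
      convert h6 using 1
      rfl
      rfl
      field_simp
    have h6 := h2.mul h4
    convert h6 using 1
    rfl
    rfl
    rfl
    field_simp
    ring
  apply convexOn_of_hasDerivWithinAt2_nonneg (convex_Ioi 0)
    (f' := fun x => Real.exp ((1-x)/x) * (1 - 1/x))
    (f'' := fun x => Real.exp ((1-x)/x) / x^3)
  · exact fun x hx => ((hder1 x hx).continuousAt).continuousWithinAt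
  · rw [hint]; exact fun x hx => (hder1 x hx).hasDerivWithinAt
  · rw [hint]; exact fun x hx => (hder2 x hx).hasDerivWithinAt
  · rw [hint]; intro x hx
    have hx' : (0:ℝ) < x := hx
    positivity

lemma mbsb_key_ineq {u m : ℝ} (hu0 : 0 < u) (hu : u < 1/2)
    (hum : u < m) (hmu : m < 1 - u) :
    (1 - m) * Real.exp (m / (1 - m)) + m * Real.exp ((1 - m) / m)
      ≤ (1 - u) * Real.exp (u / (1 - u)) + u * Real.exp ((1 - u) / u) := by
  set g : ℝ → ℝ := fun x => x * Real.exp ((1-x)/x) with hg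
  have hconv := mbsb_g_convex
  have hm0 : 0 < m := hu0.trans hum
  have hm1 : m < 1 := by linarith
  have h12 : (0:ℝ) < 1 - 2*u := by linarith
  set a : ℝ := (1 - u - m) / (1 - 2*u) with ha
  set b : ℝ := (m - u) / (1 - 2*u) with hb
  have ha0 : 0 ≤ a := div_nonneg (by linarith) h12.le
  have hb0 : 0 ≤ b := div_nonneg (by linarith) h12.le
  have hab : a + b = 1 := by
    rw [ha, hb, ← add_div, div_eq_one_iff_eq h12.ne']; ring
  have huI : u ∈ Set.Ioi (0:ℝ) := hu0
  have hvI : (1-u) ∈ Set.Ioi (0:ℝ) := Set.mem_Ioi.mpr (by linarith)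
  have hcm : a • u + b • (1-u) = m := by
    simp only [smul_eq_mul, ha, hb]; rw [div_mul_eq_mul_div, div_mul_eq_mul_div, ← add_div, div_eq_iff h12.ne']; ring
  have hcm' : b • u + a • (1-u) = 1 - m := by
    simp only [smul_eq_mul, ha, hb]; rw [div_mul_eq_mul_div, div_mul_eq_mul_div, ← add_div, div_eq_iff h12.ne']; ring
  have h1 : g m ≤ a * g u + b * g (1-u) := by
    have := hconv.2 huI hvI ha0 hb0 hab
    rwa [hcm] at this
  have h2 : g (1-m) ≤ b * g u + a * g (1-u) := by
    have := hconv.2 huI hvI hb0 ha0 (by linarith)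
    rwa [hcm'] at this
  have e1 : g m = m * Real.exp ((1-m)/m) := rfl
  have e2 : g (1-m) = (1-m) * Real.exp (m/(1-m)) := by
    simp only [hg]; ring_nf
  have e3 : g u = u * Real.exp ((1-u)/u) := rfl
  have e4 : g (1-u) = (1-u) * Real.exp (u/(1-u)) := by
    simp only [hg]; ring_nf
  have h3 : g m + g (1-m) ≤ g u + g (1-u) := by
    calc g m + g (1-m) ≤ (a * g u + b * g (1-u)) + (b * g u + a * g (1-u)) :=
          add_le_add h1 h2
    _ = (a + b) * (g u + g (1-u)) := by ring
    _ = g u + g (1-u) := by rw [hab, one_mul]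
  rw [e1, e2, e3, e4] at h3
  linarith

theorem mixture_bernoulli_subgaussian_bound
    {Ω : Type*} [MeasurableSpace Ω] (μ : Measure Ω) [IsProbabilityMeasure μ]
    (S : Ω → ℝ) (hS : Measurable S) (H : ℕ) (φ s : Fin H → ℝ) (u : ℝ)
    (hu0 : 0 < u) (hu : u < 1/2)
    (hφ : ∀ h, 0 < φ h) (hφsum : ∑ h, φ h = 1)
    (hs : ∀ h, u < s h ∧ s h < 1 - u)
    (h01 : ∀ ω, S ω = 0 ∨ S ω = 1)
    (h1 : μ {ω | S ω = 1} = ENNReal.ofReal (∑ h, φ h * s h)) :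
    ∫ ω, Real.exp ((S ω - ∑ h, φ h * s h)^2
        / ((∑ h, φ h * s h) * (1 - ∑ h, φ h * s h))) ∂μ
      ≤ (1 - u) * Real.exp (u / (1 - u)) + u * Real.exp ((1 - u) / u) := by
  set m : ℝ := ∑ h, φ h * s h with hm
  -- H is nonempty
  have hHne : (Finset.univ : Finset (Fin H)).Nonempty := by
    by_contra h
    rw [Finset.not_nonempty_iff_eq_empty] at h
    rw [h, Finset.sum_empty] at hφsum
    norm_num at hφsum
  have hum : u < m := by
    have : ∑ h, φ h * u < ∑ h, φ h * s h :=
      Finset.sum_lt_sum_of_nonempty hHne fun h _ =>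
        mul_lt_mul_of_pos_left (hs h).1 (hφ h)
    calc u = ∑ h, φ h * u := by rw [← Finset.sum_mul, hφsum, one_mul]
    _ < m := this
  have hmu : m < 1 - u := by
    have : ∑ h, φ h * s h < ∑ h, φ h * (1-u) :=
      Finset.sum_lt_sum_of_nonempty hHne fun h _ =>
        mul_lt_mul_of_pos_left (hs h).2 (hφ h)
    calc m < ∑ h, φ h * (1-u) := this
    _ = 1 - u := by rw [← Finset.sum_mul, hφsum, one_mul]
  have hm0 : 0 < m := hu0.trans hum
  have hm1 : m < 1 := by linarith
  have hm1' : (0:ℝ) < 1 - m := by linarith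
  -- S as indicator
  have hA : MeasurableSet {ω | S ω = 1} := hS (measurableSet_singleton 1)
  have hSeq : S = Set.indicator {ω | S ω = 1} (fun _ => (1:ℝ)) := by
    funext ω
    rcases h01 ω with h | h
    · rw [h, Set.indicator_of_notMem]
      simp [Set.mem_setOf_eq, h]
    · rw [h, Set.indicator_of_mem]
      exact h
  have hSint : Integrable S μ := by
    rw [hSeq]; exact (integrable_const 1).indicator hA
  have hES : ∫ ω, S ω ∂μ = m := by
    rw [show (fun ω => S ω) = S from rfl, hSeq,
      integral_indicator_const (1:ℝ) hA, measureReal_def, h1, smul_eq_mul, mul_one,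
      ENNReal.toReal_ofReal hm0.le]
  set c0 : ℝ := Real.exp (m/(1-m)) with hc0
  set c1 : ℝ := Real.exp ((1-m)/m) with hc1
  have hptwise : ∀ ω, Real.exp ((S ω - m)^2 / (m * (1-m))) = c0 + (c1 - c0) * S ω := by
    intro ω
    rcases h01 ω with h | h
    · rw [h]
      have : ((0:ℝ) - m)^2 / (m * (1-m)) = m/(1-m) := by
        field_simp; ring
      rw [this]; simp [hc0]
    · rw [h]
      have : ((1:ℝ) - m)^2 / (m * (1-m)) = (1-m)/m := by
        field_simp
      rw [this]; simp [hc1]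
  have hInt : ∫ ω, Real.exp ((S ω - m)^2 / (m * (1-m))) ∂μ
      = (1-m) * c0 + m * c1 := by
    calc ∫ ω, Real.exp ((S ω - m)^2 / (m * (1-m))) ∂μ
        = ∫ ω, (c0 + (c1 - c0) * S ω) ∂μ := by
          congr 1; funext ω; exact hptwise ω
    _ = (∫ _, c0 ∂μ) + ∫ ω, (c1 - c0) * S ω ∂μ :=
          integral_add (integrable_const c0) (hSint.const_mul _)
    _ = c0 + (c1 - c0) * m := by
          rw [integral_const, integral_const_mul, hES]
          simp
    _ = (1-m) * c0 + m * c1 := by ring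
  rw [hInt]
  exact mbsb_key_ineq hu0 hu hum hmu
end
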